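/- For the density q(x) = 1/(2(1+|x|)²) on ℝ and its translates q_r(x) = q(x−r), the squared Hellinger distance satisfies h²(q_r, q_{r'}) = ψ(|r − r'|) where ψ(x) = 1 − 2(1+x)log(1+x)/(x(2+x)) for x > 0 and ψ(0) = 0. -/

import Mathlib

open MeasureTheory Real

section helpers
open Set Filter Topology

lemma sqrt_prod' (a b : ℝ) (ha : 0 < a) (hb : 0 < b) :
    Real.sqrt ((1 / (2*a^2)) * (1 / (2*b^2))) = 1/(2*a*b) := by
  rw [show (1 / (2*a^2)) * (1 / (2*b^2)) = (1/(2*a*b))^2 by field_simp]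
  exact Real.sqrt_sq (by positivity)

lemma intOn_gen (a c d : ℝ) (hc : 0 < c + a) (hd : 0 < d + a) (hcd : c < d) :
    IntegrableOn (fun x : ℝ => 1/(2*(c+x)*(d+x))) (Ioi a) ∧
    ∫ x in Ioi a, 1/(2*(c+x)*(d+x)) = (Real.log (d+a) - Real.log (c+a))/(2*(d-c)) := by
  set g : ℝ → ℝ := fun x => (Real.log (c+x) - Real.log (d+x))/(2*(d-c)) with hg
  have hderiv : ∀ x ∈ Ici a, HasDerivAt g (1/(2*(c+x)*(d+x))) x := by
    intro x hx
    have hx' : a ≤ x := hx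
    have hc' : (0:ℝ) < c + x := by linarith
    have hd' : (0:ℝ) < d + x := by linarith
    have d1 : HasDerivAt (fun y => Real.log (c+y)) (1/(c+x)) x := by
      simpa using ((hasDerivAt_id x).const_add c).log hc'.ne'
    have d2 : HasDerivAt (fun y => Real.log (d+y)) (1/(d+x)) x := by
      simpa using ((hasDerivAt_id x).const_add d).log hd'.ne'
    have hdc : d - c ≠ 0 := by linarith
    have := (d1.sub d2).div_const (2*(d-c))
    convert this using 1
    · rfl
    · rfl
    · rfl
    rw [div_sub_div _ _ hc'.ne' hd'.ne']
    rw [div_div]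
    rw [div_eq_div_iff (by positivity) (by positivity)]
    ring
  have hpos : ∀ x ∈ Ioi a, 0 ≤ 1/(2*(c+x)*(d+x)) := by
    intro x hx
    have hx' : a < x := hx
    have hc' : (0:ℝ) < c + x := by linarith
    have hd' : (0:ℝ) < d + x := by linarith
    positivity
  have htend : Tendsto g atTop (𝓝 0) := by
    have h1 : Tendsto (fun x : ℝ => 1 + (c-d)/(d+x)) atTop (𝓝 1) := by
      have : Tendsto (fun x : ℝ => (c-d)/(d+x)) atTop (𝓝 0) := by
        apply Tendsto.div_atTop tendsto_const_nhds
        exact tendsto_atTop_add_const_left _ d tendsto_id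
      simpa using tendsto_const_nhds.add this
    have h2 : Tendsto (fun x : ℝ => Real.log (1 + (c-d)/(d+x))) atTop (𝓝 0) := by
      have := (Real.continuousAt_log (by norm_num : (1:ℝ) ≠ 0)).tendsto.comp h1
      simpa [Function.comp_def] using this
    have h3 : Tendsto (fun x : ℝ => Real.log (c+x) - Real.log (d+x)) atTop (𝓝 0) := by
      apply h2.congr'
      filter_upwards [eventually_ge_atTop (max (-c) (-d) + 1)] with x hx
      have hc' : (0:ℝ) < c + x := by
        have := le_max_left (-c) (-d); linarith
      have hd' : (0:ℝ) < d + x := by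
        have := le_max_right (-c) (-d); linarith
      rw [show 1 + (c-d)/(d+x) = (c+x)/(d+x) by field_simp; ring,
        Real.log_div hc'.ne' hd'.ne']
    have := h3.div_const (2*(d-c))
    simpa [hg] using this
  refine ⟨integrableOn_Ioi_deriv_of_nonneg' hderiv hpos htend, ?_⟩
  rw [integral_Ioi_of_hasDerivAt_of_nonneg' hderiv hpos htend]
  simp only [hg, zero_sub]
  have : d - c ≠ 0 := by linarith
  field_simp
  ring

lemma middle_int (s : ℝ) (hs : 0 < s) :
    ∫ x in (0:ℝ)..s, 1/(2*(1+x)*(1+s-x)) = Real.log (1+s)/(2+s) := by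
  have hderiv : ∀ x ∈ Set.uIcc (0:ℝ) s,
      HasDerivAt (fun y => (Real.log (1+y) - Real.log (1+s-y))/(2*(2+s)))
        (1/(2*(1+x)*(1+s-x))) x := by
    intro x hx
    rw [Set.uIcc_of_le hs.le] at hx
    obtain ⟨h0, h1⟩ := hx
    have p1 : (0:ℝ) < 1 + x := by linarith
    have p2 : (0:ℝ) < 1 + s - x := by linarith
    have d1 : HasDerivAt (fun y => Real.log (1+y)) (1/(1+x)) x := by
      simpa using ((hasDerivAt_id x).const_add 1).log p1.ne'
    have d2 : HasDerivAt (fun y => Real.log (1+s-y)) ((-1)/(1+s-x)) x := by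
      have := ((hasDerivAt_id x).const_sub (1+s)).log (by simpa using p2.ne')
      simpa using this
    have hps : (0:ℝ) < 2 + s := by linarith
    have := (d1.sub d2).div_const (2*(2+s))
    convert this using 1
    · rfl
    · rfl
    · rfl
    rw [div_sub_div _ _ p1.ne' p2.ne', div_div]
    rw [div_eq_div_iff (by positivity) (by positivity)]
    ring
  have hint : IntervalIntegrable (fun x : ℝ => 1/(2*(1+x)*(1+s-x))) volume 0 s := by
    apply ContinuousOn.intervalIntegrable
    apply ContinuousOn.div continuousOn_const
    · fun_prop
    · intro x hx
      rw [Set.uIcc_of_le hs.le] at hx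
      obtain ⟨h0, h1⟩ := hx
      nlinarith
  rw [intervalIntegral.integral_eq_sub_of_hasDerivAt hderiv hint]
  rw [show (1:ℝ)+s-s = 1 by ring, show (1:ℝ)+s-0 = 1+s by ring]
  simp only [Real.log_one]
  have : (2:ℝ) + s ≠ 0 := by linarith
  field_simp
  simp
  ring

lemma int_q0 : ∫ x : ℝ, 1/(2*(1+|x|)*(1+|x|)) = 1 := by
  have h1 : ∫ x in Ioi (0:ℝ), 1/(2*(1+x)*(1+x)) = 1/2 := by
    have hderiv : ∀ x ∈ Ici (0:ℝ), HasDerivAt (fun y => -(2*(1+y))⁻¹) (1/(2*(1+x)*(1+x))) x := by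
      intro x hx
      have hx' : (0:ℝ) ≤ x := hx
      have p1 : (0:ℝ) < 1 + x := by linarith
      have d1 : HasDerivAt (fun y : ℝ => 2*(1+y)) 2 x := by
        simpa using ((hasDerivAt_id x).const_add 1).const_mul 2
      have := (d1.inv (by positivity)).neg
      convert this using 1
      · rfl
      · rfl
      · rfl
      have h2 : (2*(1+x))^2 ≠ 0 := by positivity
      field_simp
    have hpos : ∀ x ∈ Ioi (0:ℝ), 0 ≤ 1/(2*(1+x)*(1+x)) := by
      intro x hx
      have hx' : (0:ℝ) < x := hx
      positivity
    have htend : Tendsto (fun y : ℝ => -(2*(1+y))⁻¹) atTop (𝓝 0) := by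
      have : Tendsto (fun y : ℝ => 2*(1+y)) atTop atTop := by
        apply Tendsto.const_mul_atTop (by norm_num)
        exact tendsto_atTop_add_const_left _ 1 tendsto_id
      simpa using this.inv_tendsto_atTop.neg
    rw [integral_Ioi_of_hasDerivAt_of_nonneg' hderiv hpos htend]
    norm_num
  have h2 : (fun x : ℝ => 1/(2*(1+|x|)*(1+|x|))) = fun x => (fun t => 1/(2*(1+t)*(1+t))) |x| := rfl
  rw [h2, integral_comp_abs (f := fun t => 1/(2*(1+t)*(1+t))), h1]
  norm_num


lemma key_int (s : ℝ) (hs : 0 < s) :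
    ∫ x : ℝ, 1/(2*(1+|x|)*(1+|x-s|)) = 2*(1+s)*Real.log (1+s)/(s*(2+s)) := by
  set f : ℝ → ℝ := fun x => 1/(2*(1+|x|)*(1+|x-s|)) with hf
  have eqR : EqOn f (fun x => 1/(2*((1-s)+x)*(1+x))) (Ioi s) := by
    intro x hx
    have hx' : s < x := hx
    simp only [hf]
    rw [abs_of_pos (by linarith : (0:ℝ) < x), abs_of_pos (by linarith : (0:ℝ) < x - s)]
    ring_nf
  have eqL : EqOn (fun x => f (-x)) (fun x => 1/(2*(1+x)*((1+s)+x))) (Ioi 0) := by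
    intro x hx
    have hx' : (0:ℝ) < x := hx
    simp only [hf]
    rw [abs_neg, abs_of_pos hx', show -x - s = -(x+s) by ring, abs_neg,
      abs_of_pos (by linarith : (0:ℝ) < x + s)]
    ring_nf
  have eqM : EqOn f (fun x => 1/(2*(1+x)*(1+s-x))) (Ioc 0 s) := by
    intro x hx
    obtain ⟨h0, h1⟩ := hx
    simp only [hf]
    rw [abs_of_pos h0, abs_of_nonpos (by linarith : x - s ≤ 0)]
    ring_nf
  obtain ⟨iR0, vR⟩ := intOn_gen s (1-s) 1 (by linarith) (by linarith) (by linarith)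
  obtain ⟨iL0, vL⟩ := intOn_gen 0 1 (1+s) (by norm_num) (by linarith) (by linarith)
  have iR : IntegrableOn f (Ioi s) := iR0.congr_fun eqR.symm measurableSet_Ioi
  have hcont : Continuous f := by
    apply Continuous.div continuous_const (by fun_prop)
    intro x
    positivity
  have iM : IntegrableOn f (Ioc 0 s) :=
    (hcont.integrableOn_Icc).mono_set Ioc_subset_Icc_self
  have iL : IntegrableOn f (Iic 0) := by
    rw [← Measure.map_neg_eq_self (volume : Measure ℝ)]
    have m : MeasurableEmbedding fun x : ℝ => -x := (Homeomorph.neg ℝ).measurableEmbedding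
    rw [m.integrableOn_map_iff]
    simp only [Function.comp_def, neg_preimage, neg_Iic, neg_zero]
    apply (integrableOn_Ici_iff_integrableOn_Ioi).mpr
    exact iL0.congr_fun eqL.symm measurableSet_Ioi
  have iIoi0 : IntegrableOn f (Ioi 0) := (Ioc_union_Ioi_eq_Ioi hs.le) ▸ iM.union iR
  have split1 : ∫ x, f x = (∫ x in Iic (0:ℝ), f x) + ∫ x in Ioi (0:ℝ), f x :=
    (intervalIntegral.integral_Iic_add_Ioi iL iIoi0).symm
  have split2 : ∫ x in Ioi (0:ℝ), f x = (∫ x in Ioc (0:ℝ) s, f x) + ∫ x in Ioi s, f x := by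
    rw [← Ioc_union_Ioi_eq_Ioi hs.le]
    exact setIntegral_union (Ioc_disjoint_Ioi le_rfl) measurableSet_Ioi iM iR
  have vR' : ∫ x in Ioi s, f x = Real.log (1+s)/(2*s) := by
    rw [setIntegral_congr_fun measurableSet_Ioi eqR, vR,
      show (1:ℝ)-s+s = 1 by ring, show (1:ℝ) - (1-s) = s by ring]
    simp [Real.log_one]
  have vL' : ∫ x in Iic (0:ℝ), f x = Real.log (1+s)/(2*s) := by
    have h := integral_comp_neg_Ioi (0:ℝ) f
    rw [neg_zero] at h
    rw [← h, setIntegral_congr_fun measurableSet_Ioi eqL, vL,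
      show (1:ℝ)+s+0 = 1+s by ring, show (1:ℝ)+0 = 1 by ring, show (1:ℝ)+s-1 = s by ring]
    simp [Real.log_one]
  have vM : ∫ x in Ioc (0:ℝ) s, f x = Real.log (1+s)/(2+s) := by
    rw [setIntegral_congr_fun measurableSet_Ioc eqM,
      ← intervalIntegral.integral_of_le hs.le]
    exact middle_int s hs
  rw [split1, split2, vL', vM, vR']
  have h2s : (2:ℝ)+s ≠ 0 := by linarith
  have hs0 : s ≠ 0 := hs.ne'
  field_simp
  ring

end helpers

/-- For the heavy-tailed density `q(x) = 1/(2(1+|x|)²)` and its translates `q_r(x)=q(x−r)`,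
the squared Hellinger distance `h²(q_r,q_{r'}) = 1 − ∫ √(q_r q_{r'}) dx` equals
`ψ(|r−r'|)` where `ψ(x) = 1 − 2(1+x)log(1+x)/(x(2+x))` for `x > 0` and `ψ(0) = 0`. -/
theorem stmt_9 (r r' : ℝ) :
    1 - (∫ x : ℝ, Real.sqrt ((1 / (2 * (1 + |x - r|)^2)) * (1 / (2 * (1 + |x - r'|)^2))))
      = if r = r' then 0
        else 1 - 2 * (1 + |r - r'|) * Real.log (1 + |r - r'|) / (|r - r'| * (2 + |r - r'|)) := by
  have hsimp : (∫ x : ℝ, Real.sqrt ((1 / (2 * (1 + |x - r|)^2)) * (1 / (2 * (1 + |x - r'|)^2))))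
      = ∫ x : ℝ, 1/(2*(1+|x-r|)*(1+|x-r'|)) := by
    apply integral_congr_ae
    filter_upwards with x
    exact sqrt_prod' _ _ (by positivity) (by positivity)
  rw [hsimp]
  by_cases h : r = r'
  · subst h
    rw [if_pos rfl]
    have h1 : (∫ x : ℝ, 1/(2*(1+|x-r|)*(1+|x-r|))) = 1 := by
      rw [show (fun x : ℝ => 1/(2*(1+|x-r|)*(1+|x-r|)))
          = fun x => (fun t => 1/(2*(1+|t|)*(1+|t|))) (x - r) from rfl,
        integral_sub_right_eq_self (fun t => 1/(2*(1+|t|)*(1+|t|))) r]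
      exact int_q0
    rw [h1]
    ring
  · rw [if_neg h]
    have key' : (∫ x : ℝ, 1/(2*(1+|x-r|)*(1+|x-r'|)))
        = 2*(1+|r-r'|)*Real.log (1+|r-r'|)/(|r - r'| * (2 + |r - r'|)) := by
      rcases lt_or_gt_of_ne h with hlt | hgt
      · have habs : |r - r'| = r' - r := by
          rw [abs_sub_comm]; exact abs_of_pos (by linarith)
        rw [habs]
        have hfun : (fun x : ℝ => 1/(2*(1+|x-r|)*(1+|x-r'|)))
            = fun x => (fun t => 1/(2*(1+|t|)*(1+|t-(r'-r)|))) (x - r) := by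
          funext x
          simp only
          rw [show x - r - (r' - r) = x - r' by ring]
        rw [hfun, integral_sub_right_eq_self (fun t => 1/(2*(1+|t|)*(1+|t-(r'-r)|))) r]
        exact key_int (r'-r) (by linarith)
      · have habs : |r - r'| = r - r' := abs_of_pos (by linarith)
        rw [habs]
        have hfun : (fun x : ℝ => 1/(2*(1+|x-r|)*(1+|x-r'|)))
            = fun x => (fun t => 1/(2*(1+|t|)*(1+|t-(r-r')|))) (x - r') := by
          funext x
          simp only
          rw [show x - r' - (r - r') = x - r by ring]
          ring
        rw [hfun, integral_sub_right_eq_self (fun t => 1/(2*(1+|t|)*(1+|t-(r-r')|))) r']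
        exact key_int (r-r') (by linarith)
    rw [key']
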